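/- Let E be a finitely generated projective A-module with projective basis x_1,…,x_r ∈ E* and e_1,…,e_r ∈ E (so Σ_i x_i(e)e_i = e for all e). Define ρ : End_k(A) → End_k(E) on differential operators by ρ(D)(e) := Σ_i D(x_i(e))·e_i. Then ρ is A⊗_kA-linear (ρ((a⊗b)·D) = (a⊗b)·ρ(D), where (a⊗b)·D = a∘D∘b), and if D is a differential operator on A of order ≤ l then ρ(D) is a differential operator on E of order ≤ l. -/
import Mathlib


/-- The commutator `[φ, a·Id] : m ↦ φ(a•m) - a•φ(m)`. -/
def commOp (A : Type*) [CommRing A] {M : Type*} [AddCommGroup M] [Module A M]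
    (a : A) (φ : M → M) : M → M :=
  fun m => φ (a • m) - a • φ m

/-- `IsDO A l φ`: `φ` is a differential operator of order `≤ l` on the `A`-module `M`:
order `≤ 0` means `A`-linear, and order `≤ l+1` means `[φ, a·Id]` has order `≤ l`
for all `a ∈ A`. -/
def IsDO (A : Type*) [CommRing A] {M : Type*} [AddCommGroup M] [Module A M] :
    ℕ → (M → M) → Prop
  | 0 => fun φ => ∀ (a : A) (m : M), φ (a • m) = a • φ m
  | l + 1 => fun φ => ∀ a : A, IsDO A l (commOp A a φ)

/-- let `E` be a finitely generated projective `A`-module with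
projective basis `x_1,…,x_r ∈ E*`, `e_1,…,e_r ∈ E` (so `Σ_i x_i(e)e_i = e`), and
define `ρ(D)(e) = Σ_i D(x_i(e))·e_i`.  Then `ρ` is additive and `A⊗_kA`-linear
(`ρ((a⊗b)·D) = (a⊗b)·ρ(D)` with `(a⊗b)·D = a∘D∘b`), and if `D` is a differential
operator of order `≤ l` on `A` then `ρ(D)` is a differential operator of order
`≤ l` on `E`. -/
theorem projective_basis_diffop {k A E : Type*} [CommRing k] [CommRing A]
    [Algebra k A] [AddCommGroup E] [Module A E]
    (r : ℕ) (x : Fin r → (E →ₗ[A] A)) (e : Fin r → E)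
    (hbasis : ∀ v : E, ∑ i, x i v • e i = v) :
    let ρ : (A → A) → E → E := fun D v => ∑ i, D (x i v) • e i
    (∀ (D D' : A → A) (v : E), ρ (fun t => D t + D' t) v = ρ D v + ρ D' v) ∧
    (∀ (a b : A) (D : A → A) (v : E),
      ρ (fun t => a * D (b * t)) v = a • ρ D (b • v)) ∧
    (∀ (l : ℕ) (D : A → A), IsDO A l D → IsDO A l (ρ D)) := by
  intro ρ
  have hcomm : ∀ (a : A) (D : A → A),
      commOp A a (ρ D) = ρ (commOp A a D) := by
    intro a D
    funext v
    simp only [ρ, commOp, Finset.smul_sum, map_smul, smul_eq_mul, smul_smul,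
      ← Finset.sum_sub_distrib, ← sub_smul]
  refine ⟨?_, ?_, ?_⟩
  · intro D D' v
    simp [ρ, add_smul, Finset.sum_add_distrib]
  · intro a b D v
    simp [ρ, Finset.smul_sum, smul_smul, map_smul]
  · intro l
    induction l with
    | zero =>
      intro D hD a v
      have hD' : ∀ (a t : A), D (a • t) = a • D t := hD
      simp only [ρ, Finset.smul_sum, smul_smul, map_smul, smul_eq_mul]
      simp only [← smul_eq_mul, hD']
    | succ l ih =>
      intro D hD a
      rw [hcomm]
      exact ih _ (hD a)
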